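/- Let V: ℤᵈ → [0,∞) be bounded and suppose min{|x-y| : x,y ∈ supp V, x ≠ y, |x| ≥ r, |y| ≥ r} → ∞ as r → ∞. Then for every ε > 0, a_ε(x) := Σ_{y ≠ x} √(V(x)V(y)) exp(-ε|x-y|) → 0 as |x| → ∞. -/

import Mathlib

/-- The ℓ¹ norm on `ℤᵈ`. -/
def znorm {d : ℕ} (x : Fin d → ℤ) : ℝ := ∑ i, |(x i : ℝ)|

lemma znorm_nonneg {d : ℕ} (x : Fin d → ℤ) : 0 ≤ znorm x :=
  Finset.sum_nonneg fun _ _ => abs_nonneg _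

lemma znorm_sub_le {d : ℕ} (x y : Fin d → ℤ) : znorm x - znorm y ≤ znorm (x - y) := by
  have h : znorm x ≤ znorm (x - y) + znorm y := by
    unfold znorm
    rw [← Finset.sum_add_distrib]
    apply Finset.sum_le_sum
    intro i _
    have : ((x i : ℝ)) = ((x - y) i : ℝ) + (y i : ℝ) := by
      simp [Pi.sub_apply]
    rw [this]
    exact abs_add_le _ _
  linarith

lemma summable_exp_int {c : ℝ} (hc : 0 < c) :
    Summable (fun k : ℤ => Real.exp (-c * |(k : ℝ)|)) := by
  have h : ∀ k : ℤ, Real.exp (-c * |(k : ℝ)|) = Real.exp (-c) ^ k.natAbs := by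
    intro k
    rw [← Real.exp_nat_mul, Nat.cast_natAbs]
    norm_num
    ring_nf
  have hr0 : (0:ℝ) ≤ Real.exp (-c) := (Real.exp_pos _).le
  have hr1 : Real.exp (-c) < 1 := Real.exp_lt_one_iff.mpr (by linarith)
  have hgeo := summable_geometric_of_lt_one hr0 hr1
  simp only [h]
  apply Summable.of_nat_of_neg_add_one
  · simpa using hgeo
  · have h2 : Summable (fun n : ℕ => Real.exp (-c) ^ (n + 1)) :=
      hgeo.comp_injective Nat.succ_injective
    have h3 : ∀ n : ℕ, ((-1 + -(n:ℤ)).natAbs) = n + 1 := by intro n; omega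
    simp only [h3] at *
    exact h2

lemma summable_exp_znorm {c : ℝ} (hc : 0 < c) :
    ∀ d : ℕ, Summable (fun z : Fin d → ℤ => Real.exp (-c * znorm z)) := by
  unfold znorm
  intro d
  induction d with
  | zero =>
      exact Summable.of_finite
  | succ n ih =>
      rw [← (Fin.consEquiv (fun _ : Fin (n+1) => ℤ)).summable_iff]
      have key : ∀ p : ℤ × (Fin n → ℤ),
          Real.exp (-c * ∑ i, |((Fin.cons p.1 p.2 : Fin (n+1) → ℤ) i : ℝ)|)
            = Real.exp (-c * |(p.1 : ℝ)|) * Real.exp (-c * ∑ i, |(p.2 i : ℝ)|) := by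
        intro p
        rw [← Real.exp_add]
        congr 1
        rw [Fin.sum_univ_succ]
        simp [mul_add]
        try ring
      have := (summable_exp_int hc).mul_of_nonneg ih
        (fun k => (Real.exp_pos _).le) (fun z => (Real.exp_pos _).le)
      exact (summable_congr key).mpr this

theorem stmt_11 (d : ℕ) (hd : 0 < d) (V : (Fin d → ℤ) → ℝ)
    (hV : ∀ x, 0 ≤ V x) (hVbd : ∃ M, ∀ x, V x ≤ M)
    (hsparse : ∀ D : ℝ, ∃ r : ℝ, ∀ x y : Fin d → ℤ,
      V x ≠ 0 → V y ≠ 0 → x ≠ y → r ≤ znorm x → r ≤ znorm y → D ≤ znorm (x - y)) :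
    ∀ ε > (0 : ℝ), ∀ δ > (0 : ℝ), ∃ R : ℝ, ∀ x : Fin d → ℤ, R ≤ znorm x →
      (∑' y : Fin d → ℤ,
        if y = x then 0 else Real.sqrt (V x * V y) * Real.exp (-ε * znorm (x - y))) < δ := by
  obtain ⟨M, hM⟩ := hVbd
  have hM0 : 0 ≤ M := le_trans (hV 0) (hM 0)
  intro ε hε δ hδ
  have hc : 0 < ε / 2 := by positivity
  set C := ∑' z : Fin d → ℤ, Real.exp (-(ε/2) * znorm z) with hCdef
  have hCsum := summable_exp_znorm hc d
  have hC0 : 0 ≤ C := tsum_nonneg fun z => (Real.exp_pos _).le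
  set b := δ / ((M+1)*(C+1)) with hbdef
  have hb0 : 0 < b := by positivity
  -- choose T ≥ 0 with exp(-(ε/2) T) < b
  obtain ⟨T, hT0, hTb⟩ : ∃ T : ℝ, 0 ≤ T ∧ Real.exp (-(ε/2)*T) < b := by
    refine ⟨max 0 ((2/ε)*(1 - Real.log b)), le_max_left _ _, ?_⟩
    have h1 : Real.exp (-(ε/2)*((2/ε)*(1 - Real.log b))) < b := by
      have heq : -(ε/2)*((2/ε)*(1 - Real.log b)) = Real.log b - 1 := by
        field_simp
        ring
      rw [heq, Real.exp_sub, Real.exp_log hb0]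
      exact div_lt_self hb0 (by have := Real.exp_one_gt_d9; linarith)
    refine lt_of_le_of_lt ?_ h1
    apply Real.exp_le_exp.mpr
    have := le_max_right 0 ((2/ε)*(1 - Real.log b))
    nlinarith
  obtain ⟨r, hr⟩ := hsparse T
  refine ⟨max r 0 + T, ?_⟩
  intro x hx
  by_cases hVx : V x = 0
  · have hzero : (fun y : Fin d → ℤ =>
        if y = x then 0 else Real.sqrt (V x * V y) * Real.exp (-ε * znorm (x - y)))
        = fun _ => (0:ℝ) := by
      funext y
      by_cases hy : y = x <;> simp [hy, hVx]
    rw [hzero, tsum_zero]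
    exact hδ
  · -- pointwise bound
    set K := M * Real.exp (-(ε/2)*T) with hKdef
    have hK0 : 0 ≤ K := by positivity
    have hrx : r ≤ znorm x := by
      have : r ≤ max r 0 := le_max_left _ _
      linarith
    have key : ∀ y : Fin d → ℤ,
        (if y = x then 0 else Real.sqrt (V x * V y) * Real.exp (-ε * znorm (x - y)))
          ≤ K * Real.exp (-(ε/2) * znorm (x - y)) := by
      intro y
      have hrhs : 0 ≤ K * Real.exp (-(ε/2) * znorm (x - y)) := by positivity
      by_cases hy : y = x
      · simpa [hy] using hrhs
      · rw [if_neg hy]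
        by_cases hVy : V y = 0
        · simpa [hVy] using hrhs
        · have hT' : T ≤ znorm (x - y) := by
            by_cases hyr : r ≤ znorm y
            · exact hr x y hVx hVy (Ne.symm hy) hrx hyr
            · have h1 := znorm_sub_le x y
              have : max r 0 + T ≤ znorm x := hx
              have : r ≤ max r 0 := le_max_left _ _
              linarith
          have hsq : Real.sqrt (V x * V y) ≤ M := by
            have h1 : V x * V y ≤ M * M :=
              mul_le_mul (hM x) (hM y) (hV y) hM0
            calc Real.sqrt (V x * V y) ≤ Real.sqrt (M * M) := Real.sqrt_le_sqrt h1
              _ = M := Real.sqrt_mul_self hM0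
          have hexp : Real.exp (-ε * znorm (x - y))
              ≤ Real.exp (-(ε/2)*T) * Real.exp (-(ε/2) * znorm (x - y)) := by
            rw [← Real.exp_add]
            apply Real.exp_le_exp.mpr
            nlinarith
          calc Real.sqrt (V x * V y) * Real.exp (-ε * znorm (x - y))
              ≤ M * (Real.exp (-(ε/2)*T) * Real.exp (-(ε/2) * znorm (x - y))) :=
                mul_le_mul hsq hexp (Real.exp_pos _).le hM0
            _ = K * Real.exp (-(ε/2) * znorm (x - y)) := by rw [hKdef]; ring
    have hgsum : Summable (fun y : Fin d → ℤ => K * Real.exp (-(ε/2) * znorm (x - y))) := by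
      apply Summable.mul_left
      have : Summable ((fun z : Fin d → ℤ => Real.exp (-(ε/2) * znorm z)) ∘ (Equiv.subLeft x)) :=
        (Equiv.subLeft x).summable_iff.mpr hCsum
      simpa [Function.comp_def] using this
    have hfsum : Summable (fun y : Fin d → ℤ =>
        if y = x then 0 else Real.sqrt (V x * V y) * Real.exp (-ε * znorm (x - y))) := by
      apply Summable.of_nonneg_of_le _ key hgsum
      intro y
      by_cases hy : y = x
      · simp [hy]
      · rw [if_neg hy]; positivity
    have hle := Summable.tsum_le_tsum key hfsum hgsum
    have htsumg : (∑' y : Fin d → ℤ, K * Real.exp (-(ε/2) * znorm (x - y))) = K * C := by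
      rw [tsum_mul_left]
      congr 1
      rw [hCdef]
      exact Equiv.tsum_eq (Equiv.subLeft x) (fun z : Fin d → ℤ => Real.exp (-(ε/2) * znorm z))
    rw [htsumg] at hle
    refine lt_of_le_of_lt hle ?_
    have h1 : K * C ≤ (M+1)*(C+1) * Real.exp (-(ε/2)*T) := by
      rw [hKdef]
      nlinarith [Real.exp_pos (-(ε/2)*T)]
    have h2 : (M+1)*(C+1) * Real.exp (-(ε/2)*T) < (M+1)*(C+1) * b := by
      apply mul_lt_mul_of_pos_left hTb
      positivity
    have h3 : (M+1)*(C+1) * b = δ := by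
      rw [hbdef]
      field_simp
    linarith
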